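/- Let f : {−1,1}^n → {−1,1} be a t-leaf decision tree, S ⊆ [n], and suppose E_{x∼U}[f_S(x)²] = Σ_{T ⊇ S} \hat{f}(T)² ≥ θ². Then there exists S' ⊇ S with |\hat{f}(S')| ≥ θ²/t. -/

import Mathlib

open Finset

/-- Binary decision trees over n Boolean variables with ±1 leaves. -/
inductive DTree (n : ℕ) : Type
  | leaf (b : Bool) : DTree n
  | node (i : Fin n) (l r : DTree n) : DTree n

namespace DTree

/-- Evaluation of a decision tree, with leaves taking values ±1. -/
def eval {n : ℕ} : DTree n → (Fin n → Bool) → ℝ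
  | leaf b, _ => if b then 1 else -1
  | node i l r, x => if x i then l.eval x else r.eval x

/-- Number of leaves. -/
def leaves {n : ℕ} : DTree n → ℕ
  | leaf _ => 1
  | node _ l r => l.leaves + r.leaves

/-- Depth. -/
def depth {n : ℕ} : DTree n → ℕ
  | leaf _ => 0
  | node _ l r => max l.depth r.depth + 1

end DTree

/-- Fourier coefficient of f : {−1,1}^n → ℝ under the uniform distribution,
with Boolean b encoding the point (b = true ↦ 1, b = false ↦ −1). -/
noncomputable def fourierU {n : ℕ} (f : (Fin n → Bool) → ℝ) (S : Finset (Fin n)) : ℝ :=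
  (∑ x : Fin n → Bool, f x * ∏ i ∈ S, (if x i then (1 : ℝ) else -1)) / 2 ^ n

noncomputable section
namespace DTH

variable {n : ℕ}

def sgn (b : Bool) : ℝ := if b then 1 else -1

def chi (S : Finset (Fin n)) (x : Fin n → Bool) : ℝ := ∏ i ∈ S, sgn (x i)

def flip (i : Fin n) (S : Finset (Fin n)) : Finset (Fin n) :=
  if i ∈ S then S.erase i else insert i S

lemma sgn_sq (b : Bool) : sgn b * sgn b = 1 := by cases b <;> simp [sgn]

lemma chi_flip (i : Fin n) (S : Finset (Fin n)) (x : Fin n → Bool) :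
    chi (flip i S) x = sgn (x i) * chi S x := by
  unfold flip chi
  by_cases h : i ∈ S
  · simp only [h, if_true]
    rw [← Finset.mul_prod_erase S _ h, ← mul_assoc, sgn_sq, one_mul]
  · simp only [h, if_false]
    rw [Finset.prod_insert h]

lemma flip_invol (i : Fin n) : Function.Involutive (flip i : Finset (Fin n) → Finset (Fin n)) := by
  intro S
  unfold flip
  by_cases h : i ∈ S
  · simp [h, Finset.insert_erase h]
  · simp [h, Finset.erase_insert h]

lemma sum_chi_eq_zero {S : Finset (Fin n)} (hS : S.Nonempty) :
    ∑ x : Fin n → Bool, chi S x = 0 := by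
  obtain ⟨i₀, hi₀⟩ := hS
  set e : (Fin n → Bool) → (Fin n → Bool) := fun x => Function.update x i₀ (!x i₀) with he
  have hinv : Function.Involutive e := by
    intro x
    funext j
    by_cases h : j = i₀ <;> simp [he, Function.update, h]
  have hneg : ∀ x, chi S (e x) = - chi S x := by
    intro x
    unfold chi
    rw [← Finset.mul_prod_erase S _ hi₀, ← Finset.mul_prod_erase S (fun i => sgn (x i)) hi₀]
    have h1 : ∀ j ∈ S.erase i₀, sgn ((e x) j) = sgn (x j) := by
      intro j hj
      have : j ≠ i₀ := Finset.ne_of_mem_erase hj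
      simp [he, Function.update, this]
    rw [Finset.prod_congr rfl h1]
    have h2 : sgn ((e x) i₀) = - sgn (x i₀) := by
      cases h : x i₀ <;> simp [he, Function.update, sgn, h]
    rw [h2]; ring
  have hcomp := Function.Bijective.sum_comp hinv.bijective (chi S)
  have h3 : ∑ x : Fin n → Bool, chi S (e x) = - ∑ x : Fin n → Bool, chi S x := by
    simp [hneg]
  rw [hcomp] at h3
  linarith

lemma fourierU_def (f : (Fin n → Bool) → ℝ) (S : Finset (Fin n)) :
    fourierU f S = (∑ x : Fin n → Bool, f x * chi S x) / 2 ^ n := rfl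

lemma fourier_const (c : ℝ) (S : Finset (Fin n)) :
    fourierU (fun _ => c) S = if S = ∅ then c else 0 := by
  rw [fourierU_def]
  by_cases h : S = ∅
  · subst h
    simp only [if_true, chi, Finset.prod_empty, mul_one]
    rw [Finset.sum_const, div_eq_iff (by positivity : (2:ℝ)^n ≠ 0)]
    simp [Finset.card_univ]
    ring
  · rw [if_neg h]
    rw [show (∑ x : Fin n → Bool, c * chi S x) = c * ∑ x : Fin n → Bool, chi S x from
      (Finset.mul_sum _ _ _).symm, sum_chi_eq_zero (Finset.nonempty_of_ne_empty h)]
    simp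

end DTH

namespace DTH

lemma fourier_node (i : Fin n) (l r : DTree n) (S : Finset (Fin n)) :
    fourierU (DTree.node i l r).eval S =
      (fourierU l.eval S + fourierU l.eval (flip i S)
        + fourierU r.eval S - fourierU r.eval (flip i S)) / 2 := by
  have key : ∀ x, (DTree.node i l r).eval x * chi S x
      = (l.eval x * chi S x + l.eval x * chi (flip i S) x
         + r.eval x * chi S x - r.eval x * chi (flip i S) x) / 2 := by
    intro x
    rw [chi_flip]
    cases h : x i <;> simp [DTree.eval, sgn, h] <;> ring
  simp only [fourierU_def]
  rw [Finset.sum_congr rfl fun x _ => key x, ← Finset.sum_div]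
  rw [← add_div, ← add_div, ← sub_div, ← Finset.sum_add_distrib,
    ← Finset.sum_add_distrib, ← Finset.sum_sub_distrib]
  ring

lemma l1_le (T : DTree n) :
    ∑ S : Finset (Fin n), |fourierU T.eval S| ≤ (T.leaves : ℝ) := by
  induction T with
  | leaf b =>
    have hev : (DTree.leaf b (n := n)).eval = fun _ => (if b then (1:ℝ) else -1) := rfl
    rw [hev]
    have : ∀ S : Finset (Fin n), |fourierU (fun _ => (if b then (1:ℝ) else -1)) S|
        = if S = ∅ then 1 else 0 := by
      intro S
      rw [fourier_const]
      by_cases h : S = ∅ <;> cases b <;> simp [h]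
    rw [Finset.sum_congr rfl fun S _ => this S]
    simp [DTree.leaves]
  | node i l r hl hr =>
    have hb : ∀ S : Finset (Fin n), |fourierU (DTree.node i l r).eval S|
        ≤ (|fourierU l.eval S| + |fourierU l.eval (flip i S)|
           + |fourierU r.eval S| + |fourierU r.eval (flip i S)|) / 2 := by
      intro S
      rw [fourier_node]
      rw [abs_div]
      have : |(2:ℝ)| = 2 := by norm_num
      rw [this]
      gcongr ?_ / 2
      calc |fourierU l.eval S + fourierU l.eval (flip i S)
              + fourierU r.eval S - fourierU r.eval (flip i S)|
          ≤ |fourierU l.eval S + fourierU l.eval (flip i S) + fourierU r.eval S|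
            + |fourierU r.eval (flip i S)| := abs_sub _ _
        _ ≤ |fourierU l.eval S + fourierU l.eval (flip i S)| + |fourierU r.eval S|
            + |fourierU r.eval (flip i S)| := by gcongr; exact abs_add_le _ _
        _ ≤ |fourierU l.eval S| + |fourierU l.eval (flip i S)| + |fourierU r.eval S|
            + |fourierU r.eval (flip i S)| := by gcongr; exact abs_add_le _ _
    have hflipl : ∑ S : Finset (Fin n), |fourierU l.eval (flip i S)|
        = ∑ S : Finset (Fin n), |fourierU l.eval S| :=
      Function.Bijective.sum_comp (flip_invol i).bijective (fun S => |fourierU l.eval S|)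
    have hflipr : ∑ S : Finset (Fin n), |fourierU r.eval (flip i S)|
        = ∑ S : Finset (Fin n), |fourierU r.eval S| :=
      Function.Bijective.sum_comp (flip_invol i).bijective (fun S => |fourierU r.eval S|)
    calc ∑ S : Finset (Fin n), |fourierU (DTree.node i l r).eval S|
        ≤ ∑ S : Finset (Fin n), (|fourierU l.eval S| + |fourierU l.eval (flip i S)|
           + |fourierU r.eval S| + |fourierU r.eval (flip i S)|) / 2 :=
          Finset.sum_le_sum fun S _ => hb S
      _ = ((∑ S : Finset (Fin n), |fourierU l.eval S|)
            + (∑ S : Finset (Fin n), |fourierU l.eval (flip i S)|)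
            + (∑ S : Finset (Fin n), |fourierU r.eval S|)
            + (∑ S : Finset (Fin n), |fourierU r.eval (flip i S)|)) / 2 := by
          rw [← Finset.sum_div, Finset.sum_add_distrib, Finset.sum_add_distrib,
            Finset.sum_add_distrib]
      _ = (∑ S : Finset (Fin n), |fourierU l.eval S|)
            + (∑ S : Finset (Fin n), |fourierU r.eval S|) := by
          rw [hflipl, hflipr]; ring
      _ ≤ (l.leaves : ℝ) + (r.leaves : ℝ) := by gcongr
      _ = ((DTree.node i l r).leaves : ℝ) := by simp [DTree.leaves]

end DTH

end

lemma leaves_pos {n : ℕ} (T : DTree n) : 0 < T.leaves := by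
  induction T with
  | leaf b => simp [DTree.leaves]
  | node i l r hl hr => simp [DTree.leaves]; omega

/-- If the Fourier mass of a t-leaf decision tree above a set S
is at least θ², then some superset S' of S has a Fourier coefficient of
magnitude at least θ²/t. -/
theorem dtree_heavy_superset (n t : ℕ) (T : DTree n) (hT : T.leaves = t)
    (S : Finset (Fin n)) (θ : ℝ)
    (hmass : θ ^ 2 ≤ ∑ T' ∈ univ.filter (fun T' : Finset (Fin n) => S ⊆ T'),
      (fourierU T.eval T') ^ 2) :
    ∃ S' : Finset (Fin n), S ⊆ S' ∧ θ ^ 2 / t ≤ |fourierU T.eval S'| := by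
  classical
  have ht : 0 < t := hT ▸ leaves_pos T
  set F := univ.filter (fun T' : Finset (Fin n) => S ⊆ T') with hF
  have hne : F.Nonempty := ⟨S, by simp [hF]⟩
  obtain ⟨S', hS'F, hmax⟩ := F.exists_max_image (fun T' => |fourierU T.eval T'|) hne
  refine ⟨S', (Finset.mem_filter.mp hS'F).2, ?_⟩
  set M := |fourierU T.eval S'| with hM
  have hM0 : 0 ≤ M := abs_nonneg _
  have h1 : ∑ T' ∈ F, (fourierU T.eval T') ^ 2 ≤ M * ∑ T' ∈ F, |fourierU T.eval T'| := by
    rw [Finset.mul_sum]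
    apply Finset.sum_le_sum
    intro a ha
    calc (fourierU T.eval a) ^ 2 = |fourierU T.eval a| * |fourierU T.eval a| := by
          rw [← abs_mul, abs_mul_self]; ring
      _ ≤ M * |fourierU T.eval a| :=
          mul_le_mul_of_nonneg_right (hmax a ha) (abs_nonneg _)
  have h2 : ∑ T' ∈ F, |fourierU T.eval T'| ≤ ∑ S : Finset (Fin n), |fourierU T.eval S| :=
    Finset.sum_le_sum_of_subset_of_nonneg (Finset.filter_subset _ _)
      (fun _ _ _ => abs_nonneg _)
  have h3 := DTH.l1_le T
  rw [hT] at h3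
  have : θ ^ 2 ≤ M * t := by
    calc θ ^ 2 ≤ ∑ T' ∈ F, (fourierU T.eval T') ^ 2 := hmass
      _ ≤ M * ∑ T' ∈ F, |fourierU T.eval T'| := h1
      _ ≤ M * t := by
          apply mul_le_mul_of_nonneg_left _ hM0
          exact le_trans h2 h3
  rw [div_le_iff₀ (by exact_mod_cast ht : (0:ℝ) < t)]
  linarith
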